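/- Let m ≥ 1 be an integer. For each prime p let θ⁻_{m,p} ∈ [0, π] be a point where θ ↦ D(p^{-1}, sym^m[g(θ)]) attains its minimum on [0,π], and let A_m^- := max_{θ∈[0,π]} (−tr(sym^m[g(θ)])). Then −log D(p^{-1}, sym^m[g(θ⁻_{m,p})]) − A_m^- /p = O_m(p^{-2}), i.e. there is a constant C_m such that |−log D(p^{-1}, sym^m[g(θ⁻_{m,p})]) − A_m^- /p| ≤ C_m/p² for all primes p. -/

import Mathlib

open Finset

/-- `tr(sym^m[g(θ)]) = ∑_{j=0}^m cos((m-2j)θ)`. -/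
noncomputable def trSym (m : ℕ) (θ : ℝ) : ℝ :=
  ∑ j ∈ Finset.range (m + 1), Real.cos (((m : ℝ) - 2 * (j : ℝ)) * θ)

/-- `D(p⁻¹, sym^m[g(θ)]) = ∏_{j=0}^m (1 - e^{i(m-2j)θ}/p)⁻¹` (a real number for real `θ`,
recorded via its real part). -/
noncomputable def DvalP (m p : ℕ) (θ : ℝ) : ℝ :=
  (∏ j ∈ Finset.range (m + 1),
      (1 - Complex.exp (Complex.I * ((((m : ℝ) - 2 * (j : ℝ)) * θ : ℝ) : ℂ)) * ((p : ℂ))⁻¹)⁻¹).re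

/-- `A_m^- = max_{θ∈[0,π]} (−tr(sym^m[g(θ)]))`. -/
noncomputable def Aminus (m : ℕ) : ℝ :=
  sSup ((fun θ : ℝ => -trSym m θ) '' Set.Icc 0 Real.pi)

/-! ### Auxiliary definitions and lemmas -/

/-- The `j`-th Euler factor `1 - e^{i(m-2j)θ} x`. -/
noncomputable def bfac (m : ℕ) (θ x : ℝ) (j : ℕ) : ℂ :=
  1 - Complex.exp (Complex.I * ((((m : ℝ) - 2 * (j : ℝ)) * θ : ℝ) : ℂ)) * ((x : ℝ) : ℂ)

lemma bfac_im_zero (m : ℕ) (θ x : ℝ) :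
    (∏ j ∈ Finset.range (m + 1), bfac m θ x j).im = 0 := by
  rw [← Complex.conj_eq_iff_im, map_prod]
  rw [← Finset.prod_range_reflect]
  refine Finset.prod_congr rfl fun j hj => ?_
  have hj' : j ≤ m := Nat.lt_succ_iff.mp (Finset.mem_range.mp hj)
  unfold bfac
  have h1 : ((m + 1 - 1 - j : ℕ) : ℝ) = (m : ℝ) - j := by
    have : m + 1 - 1 - j = m - j := rfl
    rw [this, Nat.cast_sub hj']
  rw [map_sub, map_one, map_mul, ← Complex.exp_conj]
  rw [Complex.conj_ofReal]
  congr 2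
  rw [map_mul, Complex.conj_I, Complex.conj_ofReal, h1]
  push_cast
  ring_nf

lemma norm_w (c x : ℝ) : ‖Complex.exp (Complex.I * (c:ℂ)) * ((x:ℝ):ℂ)‖ = |x| := by
  rw [norm_mul, mul_comm Complex.I, Complex.norm_exp_ofReal_mul_I, one_mul, Complex.norm_real, Real.norm_eq_abs]

lemma bfac_ne_zero (m : ℕ) (θ x : ℝ) (j : ℕ) (hx : |x| < 1) : bfac m θ x j ≠ 0 := by
  intro h
  have h2 : Complex.exp (Complex.I * ((((m : ℝ) - 2 * (j : ℝ)) * θ : ℝ) : ℂ)) * ((x:ℝ):ℂ) = 1 :=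
    (sub_eq_zero.mp h).symm
  have := congrArg norm h2
  rw [norm_w, norm_one] at this
  linarith

lemma bfac_cont (m : ℕ) (θ : ℝ) (j : ℕ) : Continuous (fun x : ℝ => bfac m θ x j) := by
  unfold bfac
  continuity

lemma prod_re_pos (m : ℕ) (θ : ℝ) {x : ℝ} (hx0 : 0 ≤ x) (hx1 : x < 1) :
    0 < (∏ j ∈ Finset.range (m + 1), bfac m θ x j).re := by
  set g : ℝ → ℝ := fun t => (∏ j ∈ Finset.range (m + 1), bfac m θ t j).re with hg
  have hcont : Continuous g := by
    apply Complex.continuous_re.comp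
    exact continuous_finset_prod _ fun j _ => bfac_cont m θ j
  have hg0 : g 0 = 1 := by
    simp [hg, bfac]
  have hne : ∀ t ∈ Set.Icc (0:ℝ) x, g t ≠ 0 := by
    intro t ht h0
    have habs : |t| < 1 := by
      rw [abs_of_nonneg ht.1]; exact lt_of_le_of_lt ht.2 hx1
    have hz : (∏ j ∈ Finset.range (m + 1), bfac m θ t j) = 0 := by
      apply Complex.ext
      · exact h0
      · exact bfac_im_zero m θ t
    exact Finset.prod_ne_zero_iff.mpr (fun j _ => bfac_ne_zero m θ t j habs) hz
  by_contra hle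
  push_neg at hle
  have h0mem : (0:ℝ) ∈ Set.Icc (g x) (g 0) := ⟨hle, by rw [hg0]; norm_num⟩
  obtain ⟨c, hc, hgc⟩ := intermediate_value_Icc' hx0 hcont.continuousOn h0mem
  exact hne c hc hgc

lemma DvalP_eq (m p : ℕ) (θ : ℝ) :
    DvalP m p θ = ((∏ j ∈ Finset.range (m + 1), bfac m θ (p:ℝ)⁻¹ j).re)⁻¹ := by
  have hQ : ∀ j : ℕ, (1 - Complex.exp (Complex.I * ((((m : ℝ) - 2 * (j : ℝ)) * θ : ℝ) : ℂ))
      * ((p : ℂ))⁻¹) = bfac m θ (p:ℝ)⁻¹ j := by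
    intro j; unfold bfac; push_cast; ring
  unfold DvalP
  simp_rw [hQ]
  rw [Finset.prod_inv_distrib]
  set Q := ∏ j ∈ Finset.range (m + 1), bfac m θ (p:ℝ)⁻¹ j with hQdef
  have him : Q.im = 0 := bfac_im_zero m θ _
  have hQre : Q = ((Q.re : ℝ) : ℂ) := by
    apply Complex.ext <;> simp [him]
  rw [hQre, ← Complex.ofReal_inv, Complex.ofReal_re, Complex.ofReal_re]

lemma prime_inv_lt (p : ℕ) (hp : p.Prime) : (0:ℝ) ≤ (p:ℝ)⁻¹ ∧ (p:ℝ)⁻¹ ≤ 1/2 := by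
  have h2 : (2:ℝ) ≤ p := by exact_mod_cast hp.two_le
  constructor
  · positivity
  · rw [one_div]
    exact inv_anti₀ (by norm_num) h2

lemma DvalP_pos (m p : ℕ) (hp : p.Prime) (θ : ℝ) : 0 < DvalP m p θ := by
  rw [DvalP_eq]
  have := prime_inv_lt p hp
  exact inv_pos.mpr (prod_re_pos m θ this.1 (by linarith [this.2]))

lemma neg_log_DvalP (m p : ℕ) (hp : p.Prime) (θ : ℝ) :
    -Real.log (DvalP m p θ)
      = ∑ j ∈ Finset.range (m + 1), Real.log ‖bfac m θ (p:ℝ)⁻¹ j‖ := by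
  have hx := prime_inv_lt p hp
  have habs : |(p:ℝ)⁻¹| < 1 := by rw [abs_of_nonneg hx.1]; linarith [hx.2]
  rw [DvalP_eq, Real.log_inv, neg_neg]
  set Q := ∏ j ∈ Finset.range (m + 1), bfac m θ (p:ℝ)⁻¹ j with hQdef
  have him : Q.im = 0 := bfac_im_zero m θ _
  have hpos : 0 < Q.re := prod_re_pos m θ hx.1 (by linarith [hx.2])
  have hre : Q.re = ‖Q‖ := by
    have hQre : Q = ((Q.re : ℝ) : ℂ) := by apply Complex.ext <;> simp [him]
    rw [hQre, Complex.norm_real, Real.norm_eq_abs, Complex.ofReal_re, abs_of_pos hpos]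
  rw [hre, hQdef, norm_prod, Real.log_prod]
  intro j _
  simp only [ne_eq, norm_eq_zero]
  exact bfac_ne_zero m θ _ j habs

lemma term_est (c x : ℝ) (hx : |x| ≤ 1/2) :
    |Real.log ‖1 - Complex.exp (Complex.I * (c:ℂ)) * ((x:ℝ):ℂ)‖
      + Real.cos c * x| ≤ x ^ 2 := by
  set w : ℂ := Complex.exp (Complex.I * (c:ℂ)) * ((x:ℝ):ℂ) with hw
  have hnw : ‖w‖ = |x| := by
    rw [hw, norm_mul, mul_comm Complex.I,
      Complex.norm_exp_ofReal_mul_I, one_mul, Complex.norm_real, Real.norm_eq_abs]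
  have hlt : ‖w‖ < 1 := by rw [hnw]; linarith
  have hre : (Complex.log (1 - w)).re = Real.log ‖1 - w‖ := Complex.log_re _
  have hwre : w.re = Real.cos c * x := by
    rw [hw]
    rw [mul_comm (Complex.exp _), Complex.re_ofReal_mul, mul_comm Complex.I,
      Complex.exp_ofReal_mul_I_re, mul_comm]
  have hbound : ‖Complex.log (1 - w) + w‖ ≤ ‖w‖ ^ 2 * (1 - ‖w‖)⁻¹ / 2 := by
    have h := Complex.norm_log_one_add_sub_self_le (z := -w) (by rwa [norm_neg])
    rw [norm_neg] at h
    calc ‖Complex.log (1 - w) + w‖ = ‖Complex.log (1 + -w) - (-w)‖ := by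
          rw [sub_eq_add_neg, sub_neg_eq_add]
      _ ≤ ‖w‖ ^ 2 * (1 - ‖w‖)⁻¹ / 2 := h
  have hfinal : ‖w‖ ^ 2 * (1 - ‖w‖)⁻¹ / 2 ≤ x ^ 2 := by
    rw [hnw, sq_abs]
    have h1 : (1 - |x|)⁻¹ ≤ 2 := by
      rw [inv_le_comm₀ (by linarith [abs_nonneg x]) (by norm_num)]
      linarith
    have h2 : (0:ℝ) ≤ x ^ 2 := sq_nonneg x
    nlinarith
  have habs : |(Complex.log (1 - w) + w).re| ≤ ‖Complex.log (1 - w) + w‖ :=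
    Complex.abs_re_le_norm _
  rw [Complex.add_re, hre, hwre] at habs
  linarith

/-- The key estimate: `|−log D(p⁻¹, θ) − (−tr(θ))/p| ≤ (m+1)/p²` for every `θ`. -/
lemma key_est (m p : ℕ) (hp : p.Prime) (θ : ℝ) :
    |(-Real.log (DvalP m p θ)) - (-trSym m θ) / p| ≤ (m + 1 : ℝ) / (p : ℝ) ^ 2 := by
  have hx := prime_inv_lt p hp
  have hppos : (0:ℝ) < p := by exact_mod_cast hp.pos
  rw [neg_log_DvalP m p hp θ]
  have htr : (-trSym m θ) / p
      = ∑ j ∈ Finset.range (m + 1), (-(Real.cos (((m : ℝ) - 2 * (j : ℝ)) * θ) * (p:ℝ)⁻¹)) := by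
    rw [trSym, neg_div, Finset.sum_div, ← Finset.sum_neg_distrib]
    exact Finset.sum_congr rfl fun j _ => by rw [div_eq_mul_inv]
  rw [htr, ← Finset.sum_sub_distrib]
  calc |∑ j ∈ Finset.range (m + 1),
        (Real.log ‖bfac m θ (p:ℝ)⁻¹ j‖
          - -(Real.cos (((m : ℝ) - 2 * (j : ℝ)) * θ) * (p:ℝ)⁻¹))|
      ≤ ∑ j ∈ Finset.range (m + 1),
        |Real.log ‖bfac m θ (p:ℝ)⁻¹ j‖
          - -(Real.cos (((m : ℝ) - 2 * (j : ℝ)) * θ) * (p:ℝ)⁻¹)| :=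
        Finset.abs_sum_le_sum_abs _ _
    _ ≤ ∑ j ∈ Finset.range (m + 1), ((p:ℝ)⁻¹) ^ 2 := by
        refine Finset.sum_le_sum fun j _ => ?_
        have habs2 : |(p:ℝ)⁻¹| ≤ 1/2 := by rw [abs_of_nonneg hx.1]; exact hx.2
        have := term_est (((m : ℝ) - 2 * (j : ℝ)) * θ) ((p:ℝ)⁻¹) habs2
        rw [sub_neg_eq_add]
        exact this
    _ = (m + 1 : ℝ) / (p : ℝ) ^ 2 := by
        rw [Finset.sum_const, Finset.card_range, nsmul_eq_mul]
        push_cast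
        rw [inv_pow, div_eq_mul_inv]

lemma trSym_cont (m : ℕ) : Continuous (trSym m) := by
  unfold trSym
  exact continuous_finset_sum _ fun j _ =>
    Real.continuous_cos.comp (continuous_const.mul continuous_id)

lemma Aminus_spec (m : ℕ) :
    (∃ θ ∈ Set.Icc (0:ℝ) Real.pi, -trSym m θ = Aminus m) ∧
    (∀ θ ∈ Set.Icc (0:ℝ) Real.pi, -trSym m θ ≤ Aminus m) := by
  have hK : IsCompact (Set.Icc (0:ℝ) Real.pi) := isCompact_Icc
  have hne : (Set.Icc (0:ℝ) Real.pi).Nonempty := ⟨0, le_refl 0, Real.pi_pos.le⟩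
  have hcont : Continuous fun θ : ℝ => -trSym m θ := (trSym_cont m).neg
  have himg : IsCompact ((fun θ : ℝ => -trSym m θ) '' Set.Icc 0 Real.pi) :=
    hK.image hcont
  have himgne : ((fun θ : ℝ => -trSym m θ) '' Set.Icc 0 Real.pi).Nonempty :=
    hne.image _
  have hmem := himg.sSup_mem himgne
  constructor
  · obtain ⟨θ, hθ, hval⟩ := hmem
    exact ⟨θ, hθ, hval⟩
  · intro θ hθ
    exact le_csSup himg.bddAbove ⟨θ, hθ, rfl⟩

/-- If for each prime `p`, `θ⁻_{m,p} ∈ [0,π]` minimizes `θ ↦ D(p⁻¹, sym^m[g(θ)])`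
on `[0,π]`, then `−log D(p⁻¹, sym^m[g(θ⁻_{m,p})]) − A_m⁻ / p = O_m(p⁻²)`. -/
theorem minimizer_log_euler_factor (m : ℕ) (hm : 1 ≤ m) (θm : ℕ → ℝ)
    (hθm : ∀ p : ℕ, p.Prime →
      θm p ∈ Set.Icc 0 Real.pi ∧ IsMinOn (DvalP m p) (Set.Icc 0 Real.pi) (θm p)) :
    ∃ C : ℝ, ∀ p : ℕ, p.Prime →
      |(-Real.log (DvalP m p (θm p))) - Aminus m / p| ≤ C / (p : ℝ) ^ 2 := by
  refine ⟨(m + 1 : ℝ), fun p hp => ?_⟩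
  obtain ⟨hmem, hmin⟩ := hθm p hp
  have hppos : (0:ℝ) < p := by exact_mod_cast hp.pos
  have hp2 : (0:ℝ) < (p:ℝ) ^ 2 := by positivity
  obtain ⟨⟨θs, hθs, hθsval⟩, hAub⟩ := Aminus_spec m
  set E : ℝ := (m + 1 : ℝ) / (p : ℝ) ^ 2 with hE
  have hkey1 := abs_le.mp (key_est m p hp (θm p))
  have hkey2 := abs_le.mp (key_est m p hp θs)
  have hdiv : (-trSym m (θm p)) / p ≤ Aminus m / p :=
    (div_le_div_iff_of_pos_right hppos).mpr (hAub _ hmem)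
  -- lower bound via the minimizer property
  have hDle : DvalP m p (θm p) ≤ DvalP m p θs := hmin hθs
  have hlog : Real.log (DvalP m p (θm p)) ≤ Real.log (DvalP m p θs) :=
    Real.log_le_log (DvalP_pos m p hp _) hDle
  have hAeq : (-trSym m θs) / p = Aminus m / p := by rw [hθsval]
  rw [abs_le]
  constructor
  · -- lower: f θp ≥ f θs ≥ Aminus/p − E
    have h1 : -Real.log (DvalP m p θs) ≥ Aminus m / p - E := by
      rw [← hAeq]; linarith [hkey2.1]
    linarith
  · -- upper
    linarith [hkey1.2]
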